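/- Let a, b, c, d, r, s be integers with a² + b² + c² = 3d², q := a² + b² ≠ 0 and s² + 3r² = 2q. Define the vectors ζ, η ∈ ℚ³ by ζ = (−(rac + dbs)/q, (das − bcr)/q, r) and η = (−(db(s−3r) + ac(r+s))/(2q), (da(s−3r) − bc(r+s))/(2q), (r+s)/2). Then ζ·ζ = 2d², η·η = 2d², ζ·η = d², and a·ζ₁ + b·ζ₂ + c·ζ₃ = 0 and a·η₁ + b·η₂ + c·η₃ = 0. -/

import Mathlib

/-- Dot product of rational vectors in `ℚ³`. -/
def dot3Q (u v : Fin 3 → ℚ) : ℚ := ∑ i, u i * v i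

/-- The vectors `ζ, η` of the parametrization satisfy `ζ·ζ = η·η = 2d²`, `ζ·η = d²`,
and are orthogonal to `(a,b,c)`, whenever `a² + b² + c² = 3d²`, `q = a² + b² ≠ 0`
and `s² + 3r² = 2q`. -/
theorem zeta_eta_properties (a b c d r s q : ℤ)
    (habc : a ^ 2 + b ^ 2 + c ^ 2 = 3 * d ^ 2)
    (hq : q = a ^ 2 + b ^ 2) (hq0 : q ≠ 0) (hrs : s ^ 2 + 3 * r ^ 2 = 2 * q)
    (ζ η : Fin 3 → ℚ)
    (hζ : ζ = ![-(((r : ℚ) * a * c + (d : ℚ) * b * s)) / (q : ℚ),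
                ((d : ℚ) * a * s - (b : ℚ) * c * r) / (q : ℚ),
                (r : ℚ)])
    (hη : η = ![-(((d : ℚ) * b * ((s : ℚ) - 3 * r) + (a : ℚ) * c * ((r : ℚ) + s))) / (2 * (q : ℚ)),
                ((d : ℚ) * a * ((s : ℚ) - 3 * r) - (b : ℚ) * c * ((r : ℚ) + s)) / (2 * (q : ℚ)),
                ((r : ℚ) + s) / 2]) :
    dot3Q ζ ζ = 2 * (d : ℚ) ^ 2 ∧ dot3Q η η = 2 * (d : ℚ) ^ 2 ∧
      dot3Q ζ η = (d : ℚ) ^ 2 ∧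
      (a : ℚ) * ζ 0 + (b : ℚ) * ζ 1 + (c : ℚ) * ζ 2 = 0 ∧
      (a : ℚ) * η 0 + (b : ℚ) * η 1 + (c : ℚ) * η 2 = 0 := by
  have hq' : (q:ℚ) - (a:ℚ)^2 - (b:ℚ)^2 = 0 := by
    have := congrArg (Int.cast : ℤ → ℚ) hq; push_cast at this; linarith
  have habc' : (a:ℚ)^2 + (b:ℚ)^2 + (c:ℚ)^2 - 3*(d:ℚ)^2 = 0 := by
    have := congrArg (Int.cast : ℤ → ℚ) habc; push_cast at this; linarith
  have hrs' : (s:ℚ)^2 + 3*(r:ℚ)^2 - 2*(q:ℚ) = 0 := by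
    have := congrArg (Int.cast : ℤ → ℚ) hrs; push_cast at this; linarith
  have hq0Q : (q : ℚ) ≠ 0 := Int.cast_ne_zero.mpr hq0
  subst hζ hη
  refine ⟨?_, ?_, ?_, ?_, ?_⟩ <;>
    simp only [dot3Q, Fin.sum_univ_three, Matrix.cons_val_zero, Matrix.cons_val_one,
      Matrix.head_cons, Matrix.cons_val_two, Matrix.tail_cons]
  · field_simp
    linear_combination ((r:ℚ)^2*(q:ℚ) + (-2)*(d:ℚ)^2*(q:ℚ) + (b:ℚ)^2*(r:ℚ)^2 + (a:ℚ)^2*(r:ℚ)^2) * hq' +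
      ((b:ℚ)^2*(r:ℚ)^2 + (a:ℚ)^2*(r:ℚ)^2) * habc' +
      ((b:ℚ)^2*(d:ℚ)^2 + (a:ℚ)^2*(d:ℚ)^2) * hrs'
  · field_simp
    linear_combination (1:ℚ) * (((s:ℚ)^2*(q:ℚ) + 2*(r:ℚ)*(s:ℚ)*(q:ℚ) + (r:ℚ)^2*(q:ℚ) + (-8)*(d:ℚ)^2*(q:ℚ) + (b:ℚ)^2*(s:ℚ)^2 + 2*(b:ℚ)^2*(r:ℚ)*(s:ℚ) + (b:ℚ)^2*(r:ℚ)^2 + (a:ℚ)^2*(s:ℚ)^2 + 2*(a:ℚ)^2*(r:ℚ)*(s:ℚ) + (a:ℚ)^2*(r:ℚ)^2) * hq' +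
      ((b:ℚ)^2*(s:ℚ)^2 + 2*(b:ℚ)^2*(r:ℚ)*(s:ℚ) + (b:ℚ)^2*(r:ℚ)^2 + (a:ℚ)^2*(s:ℚ)^2 + 2*(a:ℚ)^2*(r:ℚ)*(s:ℚ) + (a:ℚ)^2*(r:ℚ)^2) * habc' +
      (4*(b:ℚ)^2*(d:ℚ)^2 + 4*(a:ℚ)^2*(d:ℚ)^2) * hrs')
  · field_simp
    linear_combination (1:ℚ) * (((r:ℚ)*(s:ℚ)*(q:ℚ) + (r:ℚ)^2*(q:ℚ) + (-2)*(d:ℚ)^2*(q:ℚ) + (b:ℚ)^2*(r:ℚ)*(s:ℚ) + (b:ℚ)^2*(r:ℚ)^2 + (a:ℚ)^2*(r:ℚ)*(s:ℚ) + (a:ℚ)^2*(r:ℚ)^2) * hq' +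
      ((b:ℚ)^2*(r:ℚ)*(s:ℚ) + (b:ℚ)^2*(r:ℚ)^2 + (a:ℚ)^2*(r:ℚ)*(s:ℚ) + (a:ℚ)^2*(r:ℚ)^2) * habc' +
      ((b:ℚ)^2*(d:ℚ)^2 + (a:ℚ)^2*(d:ℚ)^2) * hrs')
  · field_simp
    linear_combination ((c:ℚ)*(r:ℚ)) * hq'
  · field_simp
    linear_combination ((c:ℚ)*(s:ℚ) + (c:ℚ)*(r:ℚ)) * hq'
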